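/- Let b > 0 be real, A ∈ ℂ, and set λ_± = ½(A ± √(A² − 4b)), where √ is the principal square root. Then Re λ_− ≤ ½ Re A. Moreover, if Re A ≥ 0 then Re λ_+ ≤ Re A, and if Re A < 0 then Re λ_+ < 0. -/

import Mathlib

/-- The principal square root on `ℂ`: the square root with nonnegative real part
(and nonnegative imaginary part when the real part is zero). -/
noncomputable def csqrt (z : ℂ) : ℂ := z ^ (1 / 2 : ℂ)

lemma csqrt_re_nonneg (z : ℂ) : 0 ≤ (csqrt z).re := by
  unfold csqrt
  by_cases hz : z = 0
  · simp [hz, Complex.zero_cpow (by norm_num : (1/2:ℂ) ≠ 0)]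
  · rw [Complex.cpow_def_of_ne_zero hz, Complex.exp_re]
    have him : (Complex.log z * (1/2 : ℂ)).im = z.arg / 2 := by
      simp [Complex.mul_im, Complex.log_im]; ring
    rw [him]
    apply mul_nonneg (Real.exp_nonneg _)
    apply Real.cos_nonneg_of_mem_Icc
    constructor
    · have := Complex.neg_pi_lt_arg z; linarith [Real.pi_pos]
    · have := Complex.arg_le_pi z; linarith [Real.pi_pos]

lemma csqrt_sq (z : ℂ) (hz : z ≠ 0) : (csqrt z) * (csqrt z) = z := by
  unfold csqrt
  rw [← Complex.cpow_add _ _ hz]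
  norm_num

/-- For `b > 0` and `λ± = ½(A ± √(A² − 4b))`: `Re λ₋ ≤ ½ Re A`; if `Re A ≥ 0`
then `Re λ₊ ≤ Re A`; and if `Re A < 0` then `Re λ₊ < 0`. -/
theorem stmt15 (b : ℝ) (hb : 0 < b) (A : ℂ) :
    let lamPlus : ℂ := (A + csqrt (A ^ 2 - 4 * (b : ℂ))) / 2
    let lamMinus : ℂ := (A - csqrt (A ^ 2 - 4 * (b : ℂ))) / 2
    lamMinus.re ≤ A.re / 2 ∧
    (0 ≤ A.re → lamPlus.re ≤ A.re) ∧
    (A.re < 0 → lamPlus.re < 0) := by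
  intro lamPlus lamMinus
  set z : ℂ := A ^ 2 - 4 * (b : ℂ) with hzdef
  set s : ℂ := csqrt z with hsdef
  set x := A.re
  set y := A.im
  set p := s.re
  set q := s.im
  have hp0 : 0 ≤ p := csqrt_re_nonneg z
  -- key facts
  have hkey : (x = 0 → p = 0) ∧ (x ≠ 0 → p < |x|) := by
    by_cases hz : z = 0
    · have hs0 : s = 0 := by
        rw [hsdef]; unfold csqrt
        simp [hz, Complex.zero_cpow (by norm_num : (1/2:ℂ) ≠ 0)]
      have hp : p = 0 := by rw [show p = s.re from rfl, hs0]; simp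
      refine ⟨fun _ => hp, fun hx => ?_⟩
      rw [hp]
      exact abs_pos.mpr hx
    · have hsq : s * s = z := csqrt_sq z hz
      have h1 : p * p - q * q = x * x - y * y - 4 * b := by
        have := congrArg Complex.re hsq
        simp [Complex.mul_re, hzdef, pow_two, Complex.sub_re, Complex.mul_im] at this
        linarith [this]
      have h2 : p * q = x * y := by
        have := congrArg Complex.im hsq
        simp [Complex.mul_im, hzdef, pow_two, Complex.mul_re, Complex.sub_im] at this
        linarith [this]
      constructor
      · intro hx
        by_contra hp
        have hppos : 0 < p := lt_of_le_of_ne hp0 (Ne.symm hp)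
        have hq : q = 0 := by
          have : p * q = 0 := by rw [h2, hx]; ring
          exact (mul_eq_zero.mp this).resolve_left (ne_of_gt hppos)
        nlinarith
      · intro hx
        by_contra hle
        push_neg at hle
        have haxpos : 0 < |x| := abs_pos.mpr hx
        have hx2 : x ^ 2 ≤ p ^ 2 := by nlinarith [sq_abs x]
        have hppos : 0 < p := lt_of_lt_of_le haxpos hle
        have hpq2 : p ^ 2 * q ^ 2 = x ^ 2 * y ^ 2 := by
          calc p ^ 2 * q ^ 2 = (p * q) ^ 2 := by ring
            _ = (x * y) ^ 2 := by rw [h2]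
            _ = x ^ 2 * y ^ 2 := by ring
        have hq2 : q ^ 2 ≤ y ^ 2 := by nlinarith [hpq2, hx2, sq_nonneg y, sq_nonneg q, mul_pos hppos hppos]
        nlinarith
  have hm : lamMinus.re = (x - p) / 2 := by
    show ((A - s) / 2).re = (x - p) / 2
    simp [Complex.div_re, Complex.normSq]; rfl
  have hpl : lamPlus.re = (x + p) / 2 := by
    show ((A + s) / 2).re = (x + p) / 2
    simp [Complex.div_re, Complex.normSq]; rfl
  refine ⟨by rw [hm]; linarith, fun hx => ?_, fun hx => ?_⟩
  · rw [hpl]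
    rcases eq_or_lt_of_le hx with h | h
    · have := hkey.1 h.symm; linarith
    · have := hkey.2 (ne_of_gt h)
      rw [abs_of_pos h] at this; linarith
  · rw [hpl]
    have := hkey.2 (ne_of_lt hx)
    rw [abs_of_neg hx] at this; linarith
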